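/- (Chebotarëv) Let p be prime and ω ∈ ℂ a primitive p-th root of unity. Then every square submatrix of the p×p matrix [ω^{ij}]_{0≤i,j≤p-1} is nonsingular; equivalently, for any 0 ≤ b_1 < … < b_k ≤ p-1 and 0 ≤ a_1 < … < a_k ≤ p-1 with k ≤ p, det([ω^{b_i a_j}]) ≠ 0. -/

import Mathlib

/-!
We prove Chebotarëv's theorem following the Frenkel/Tao approach: we work in
`R := AdjoinRoot (cyclotomic p ℤ)`, show by induction on `k` that the relevant
determinant is nonzero there (using a cofactor kernel vector, the `(θ - 1)`-adic
normalization, and the "few nonzero terms" lemma over `ZMod p`), and transfer the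
result to `ℂ` along the injective ring map sending the root to `ω`.
-/

open Polynomial

namespace ChebotarevAux

theorem prod_X_sub_C_dvd_of_roots {R : Type*} [CommRing R] [IsDomain R] {ι : Type*}
    [DecidableEq ι] (s : Finset ι) (r : ι → R) (f : R[X])
    (hinj : ∀ i ∈ s, ∀ j ∈ s, r i = r j → i = j)
    (hroot : ∀ i ∈ s, f.eval (r i) = 0) :
    (∏ i ∈ s, (X - C (r i))) ∣ f := by
  induction s using Finset.induction_on generalizing f with
  | empty => simp
  | insert a s hns ih =>
    have hfa : (X - C (r a)) ∣ f :=
      dvd_iff_isRoot.mpr (hroot a (Finset.mem_insert_self a s))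
    obtain ⟨g, hg⟩ := hfa
    have hgroots : ∀ i ∈ s, g.eval (r i) = 0 := by
      intro i hi2
      have h0 := hroot i (Finset.mem_insert_of_mem hi2)
      rw [hg, eval_mul, eval_sub, eval_X, eval_C] at h0
      have hne : r i - r a ≠ 0 := by
        refine sub_ne_zero.mpr fun hh => ?_
        have := hinj i (Finset.mem_insert_of_mem hi2) a (Finset.mem_insert_self a s) hh
        rw [this] at hi2; exact hns hi2
      exact (mul_eq_zero.mp h0).resolve_left hne
    rw [Finset.prod_insert hns, hg]
    exact mul_dvd_mul_left _ (ih g (fun i hi j hj => hinj i (Finset.mem_insert_of_mem hi) j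
      (Finset.mem_insert_of_mem hj)) hgroots)

theorem few_terms (p : ℕ) (hp : p.Prime) :
    ∀ (k : ℕ) (e : Fin k → ℕ), StrictMono e → (∀ i, e i ≤ p - 1) →
    ∀ (c : Fin k → ZMod p),
      ((X - 1 : (ZMod p)[X]) ^ k ∣ ∑ j, C (c j) * X ^ (e j)) → ∀ j, c j = 0 := by
  haveI : Fact p.Prime := ⟨hp⟩
  intro k
  induction k with
  | zero => intro e _ _ c _ j; exact j.elim0
  | succ n ih =>
    intro e he hele c hdvd
    have hlt : ∀ i, e i < p := fun i => lt_of_le_of_lt (hele i) (Nat.sub_lt hp.pos one_pos)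
    have key : ∀ (a : ZMod p) (m : ℕ),
        X * derivative (C a * X ^ m) = C (a * m) * X ^ m := by
      intro a m
      cases m with
      | zero => simp
      | succ l =>
        rw [derivative_C_mul_X_pow]
        rw [Nat.add_sub_cancel]
        push_cast
        ring
    set f : (ZMod p)[X] := ∑ j, C (c j) * X ^ (e j) with hf
    have hg : X * derivative f - C ((e 0 : ZMod p)) * f
        = ∑ j, C (c j * ((e j : ZMod p) - (e 0 : ZMod p))) * X ^ (e j) := by
      rw [hf, derivative_sum, Finset.mul_sum, Finset.mul_sum, ← Finset.sum_sub_distrib]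
      refine Finset.sum_congr rfl fun j _ => ?_
      rw [key]
      simp only [map_sub, map_mul, mul_sub]
      ring
    -- divisibility by (X-1)^n
    obtain ⟨h, hh⟩ := hdvd
    have hd1 : (X - 1 : (ZMod p)[X]) ^ n ∣ X * derivative f - C ((e 0 : ZMod p)) * f := by
      have hdf : (X - 1 : (ZMod p)[X]) ^ n ∣ derivative f := by
        rw [hh, derivative_mul, derivative_pow, Nat.add_sub_cancel]
        refine dvd_add ⟨C ((n+1 : ℕ) : ZMod p) * derivative (X - 1) * h, by ring⟩
          ⟨(X - 1) * derivative h, by ring⟩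
      have hdf2 : (X - 1 : (ZMod p)[X]) ^ n ∣ f :=
        (pow_dvd_pow _ (Nat.le_succ n)).trans ⟨h, hh⟩
      exact dvd_sub (hdf.mul_left X) (hdf2.mul_left _)
    rw [hg] at hd1
    -- reindex
    have hsum : ∑ j : Fin (n+1), C (c j * ((e j : ZMod p) - (e 0 : ZMod p))) * X ^ (e j)
        = ∑ j : Fin n, C ((c j.succ * ((e j.succ : ZMod p) - (e 0 : ZMod p)))) * X ^ (e j.succ) := by
      rw [Fin.sum_univ_succ]
      simp
    rw [hsum] at hd1
    have hsm : StrictMono (fun j : Fin n => e j.succ) :=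
      fun i j hij => he (by exact Fin.succ_lt_succ_iff.mpr hij)
    have ihres := ih (fun j => e j.succ) hsm (fun i => hele _)
      (fun j => c j.succ * ((e j.succ : ZMod p) - (e 0 : ZMod p))) hd1
    have hcs : ∀ j : Fin n, c j.succ = 0 := by
      intro j
      have hne : ((e j.succ : ZMod p) - (e 0 : ZMod p)) ≠ 0 := by
        intro h0
        rw [sub_eq_zero] at h0
        have : e j.succ = e 0 := by
          have h1 := ZMod.val_cast_of_lt (hlt j.succ)
          have h2 := ZMod.val_cast_of_lt (hlt 0)
          rw [← h1, ← h2, h0]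
        exact absurd (he.injective this) (Fin.succ_ne_zero j)
      exact (mul_eq_zero.mp (ihres j)).resolve_right hne
    have hc0 : c 0 = 0 := by
      have hf0 : f = C (c 0) * X ^ (e 0) := by
        rw [hf, Fin.sum_univ_succ]
        simp [hcs]
      have hdvd' : (X - 1 : (ZMod p)[X]) ∣ C (c 0) * X ^ (e 0) := by
        rw [← hf0]
        exact (dvd_pow_self _ (Nat.succ_ne_zero n)).trans ⟨h, hh⟩
      obtain ⟨q, hq⟩ := hdvd'
      have := congrArg (eval 1) hq
      simpa using this
    intro j
    refine Fin.cases hc0 hcs j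

section Ring

variable (p : ℕ) [hpf : Fact p.Prime]


local notation "Φ" => cyclotomic p ℤ
local notation "Rp" => AdjoinRoot (cyclotomic p ℤ)

instance : IsDomain Rp := by
  have hirr : Irreducible Φ := cyclotomic.irreducible (Fact.out (p := p.Prime)).pos
  have hprime : Prime Φ := hirr.prime
  haveI : (Ideal.span {Φ}).IsPrime := (Ideal.span_singleton_prime hprime.ne_zero).mpr hprime
  exact inferInstanceAs (IsDomain (Polynomial ℤ ⧸ Ideal.span {Φ}))

theorem natCast_p_ne_zero : ((p : ℕ) : Rp) ≠ 0 := by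
  intro h
  have h1 : AdjoinRoot.mk Φ (C ((p : ℕ) : ℤ)) = 0 := by
    rw [AdjoinRoot.mk_C]; push_cast; exact h
  rw [AdjoinRoot.mk_eq_zero] at h1
  have hC : (C ((p : ℕ) : ℤ)) ≠ 0 := by
    simp [Fact.out (p := p.Prime).ne_zero]
  have := natDegree_le_of_dvd h1 hC
  rw [natDegree_cyclotomic, natDegree_C, Nat.totient_prime (Fact.out (p := p.Prime))] at this
  have h2 := (Fact.out (p := p.Prime)).two_le
  omega

theorem primroot : IsPrimitiveRoot (AdjoinRoot.root Φ) p := by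
  haveI : NeZero ((p : ℕ) : Rp) := ⟨natCast_p_ne_zero p⟩
  rw [← Polynomial.isRoot_cyclotomic_iff]
  have : cyclotomic p Rp = (cyclotomic p ℤ).map (AdjoinRoot.of Φ) := (map_cyclotomic p _).symm
  rw [IsRoot.def, this, eval_map]
  exact AdjoinRoot.eval₂_root Φ

noncomputable def eps : Rp →+* ZMod p :=
  AdjoinRoot.lift (Int.castRingHom (ZMod p)) 1 (by
    rw [Polynomial.eval₂_at_one, eval_one_cyclotomic_prime]
    simp)

@[simp] theorem eps_root : eps p (AdjoinRoot.root Φ) = 1 := AdjoinRoot.lift_root _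

theorem root_sub_one_dvd_p : (AdjoinRoot.root Φ - 1) ∣ ((p : ℕ) : Rp) := by
  have h1 : (X - C (1 : ℤ)) ∣ (Φ - C (eval 1 Φ)) := X_sub_C_dvd_sub_C_eval
  have h2 := map_dvd (AdjoinRoot.mk Φ) h1
  rw [map_sub, map_sub, AdjoinRoot.mk_X, AdjoinRoot.mk_self, zero_sub, AdjoinRoot.mk_C, AdjoinRoot.mk_C,
    eval_one_cyclotomic_prime] at h2
  have h3 : (AdjoinRoot.root Φ - 1) ∣ -(AdjoinRoot.of Φ) ((p:ℕ) : ℤ) := by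
    simpa using h2
  rw [dvd_neg] at h3
  simpa using h3

theorem dvd_of_eps_eq_zero (x : Rp) (hx : eps p x = 0) : (AdjoinRoot.root Φ - 1) ∣ x := by
  obtain ⟨g, rfl⟩ := AdjoinRoot.mk_surjective x
  rw [eps, AdjoinRoot.lift_mk, Polynomial.eval₂_at_one] at hx
  have hp1 : ((p : ℕ) : ℤ) ∣ g.eval 1 := by
    have hx2 : ((g.eval 1 : ℤ) : ZMod p) = 0 := hx
    rwa [ZMod.intCast_zmod_eq_zero_iff_dvd] at hx2
  obtain ⟨m, hm⟩ := hp1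
  have h1 : (X - C (1 : ℤ)) ∣ (g - C (g.eval 1)) := X_sub_C_dvd_sub_C_eval
  have h2 := map_dvd (AdjoinRoot.mk Φ) h1
  rw [map_sub, map_sub, AdjoinRoot.mk_X, AdjoinRoot.mk_C, AdjoinRoot.mk_C] at h2
  have h3 : (AdjoinRoot.root Φ - 1) ∣ (AdjoinRoot.of Φ) (g.eval 1) := by
    rw [hm, map_mul]
    exact Dvd.dvd.mul_right (by simpa using root_sub_one_dvd_p p) _
  have := dvd_add h2 h3
  simpa using this

theorem exists_not_dvd_pow {x : Rp} (hx : x ≠ 0) :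
    ∃ n : ℕ, ¬ (AdjoinRoot.root Φ - 1) ^ n ∣ x := by
  by_contra hcon
  push_neg at hcon
  have hunit : ¬ IsUnit (AdjoinRoot.root Φ - 1) := by
    intro hu
    have h2 : IsUnit (eps p (AdjoinRoot.root Φ - 1)) := hu.map (eps p)
    rw [map_sub, eps_root, map_one, sub_self] at h2
    exact not_isUnit_zero h2
  have hI : Ideal.span {(AdjoinRoot.root Φ - 1)} ≠ ⊤ := by
    rwa [Ne, Ideal.span_singleton_eq_top]
  haveI : IsNoetherianRing Rp :=
    inferInstanceAs (IsNoetherianRing (Polynomial ℤ ⧸ Ideal.span {Φ}))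
  have hbot := Ideal.iInf_pow_eq_bot_of_isDomain (I := Ideal.span {(AdjoinRoot.root Φ - 1)}) hI
  have hx0 : x ∈ ⨅ n : ℕ, (Ideal.span {(AdjoinRoot.root Φ - 1)}) ^ n := by
    rw [Submodule.mem_iInf]
    intro n
    rw [Ideal.span_singleton_pow, Ideal.mem_span_singleton]
    exact hcon n
  rw [hbot] at hx0
  exact hx (by simpa using hx0)

end Ring

theorem det_root_ne_zero (p : ℕ) (hp : p.Prime) :
    ∀ (k : ℕ) (b a : Fin k → ℕ), StrictMono b → StrictMono a →
      (∀ i, b i ≤ p - 1) → (∀ i, a i ≤ p - 1) →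
      Matrix.det (Matrix.of fun i j : Fin k =>
        (AdjoinRoot.root (cyclotomic p ℤ)) ^ (b i * a j)) ≠ 0 := by
  haveI : Fact p.Prime := ⟨hp⟩
  intro k
  induction k with
  | zero =>
    intro b a _ _ _ _
    rw [Matrix.det_fin_zero]
    exact one_ne_zero
  | succ n ih =>
    intro b a hb ha hbp hap hdet
    set θ := AdjoinRoot.root (cyclotomic p ℤ) with hθ
    set M : Matrix (Fin (n+1)) (Fin (n+1)) (AdjoinRoot (cyclotomic p ℤ)) :=
      Matrix.of fun i j => θ ^ (b i * a j) with hM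
    set c : Fin (n+1) → AdjoinRoot (cyclotomic p ℤ) := fun j =>
      (-1) ^ (n + (j : ℕ)) * Matrix.det (M.submatrix (Fin.last n).succAbove j.succAbove) with hcdef
    have hminor : ∀ j : Fin (n+1),
        Matrix.det (M.submatrix (Fin.last n).succAbove j.succAbove) ≠ 0 := by
      intro j
      have hEq : M.submatrix (Fin.last n).succAbove j.succAbove
          = Matrix.of (fun r s : Fin n =>
              θ ^ ((b ∘ (Fin.last n).succAbove) r * ((a ∘ j.succAbove) s))) := by
        ext r s
        rfl
      rw [hEq]
      exact ih (b ∘ (Fin.last n).succAbove) (a ∘ j.succAbove)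
        (hb.comp (Fin.strictMono_succAbove _)) (ha.comp (Fin.strictMono_succAbove _))
        (fun i => hbp _) (fun i => hap _)
    have hc : ∀ j, c j ≠ 0 := fun j =>
      mul_ne_zero (pow_ne_zero _ (neg_ne_zero.mpr one_ne_zero)) (hminor j)
    have hrel : ∀ i, ∑ j, M i j * c j = 0 := by
      intro i
      have hN : (M.updateRow (Fin.last n) (M i)).det = 0 := by
        rcases eq_or_ne i (Fin.last n) with h | h
        · rw [h, Matrix.updateRow_eq_self]
          exact hdet
        · refine Matrix.det_zero_of_row_eq h ?_
          rw [Matrix.updateRow_ne h, Matrix.updateRow_self]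
      have hexp := Matrix.det_succ_row (M.updateRow (Fin.last n) (M i)) (Fin.last n)
      rw [hN] at hexp
      have hterm : ∀ j : Fin (n+1),
          (-1 : AdjoinRoot (cyclotomic p ℤ)) ^ ((Fin.last n : ℕ) + (j : ℕ))
              * (M.updateRow (Fin.last n) (M i)) (Fin.last n) j
              * ((M.updateRow (Fin.last n) (M i)).submatrix
                  (Fin.last n).succAbove j.succAbove).det
            = M i j * c j := by
        intro j
        have h1 : (M.updateRow (Fin.last n) (M i)) (Fin.last n) = M i :=
          Matrix.updateRow_self
        have h2 : (M.updateRow (Fin.last n) (M i)).submatrix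
            (Fin.last n).succAbove j.succAbove
            = M.submatrix (Fin.last n).succAbove j.succAbove := by
          ext r s
          rw [Matrix.submatrix_apply, Matrix.submatrix_apply,
            Matrix.updateRow_ne (Fin.succAbove_ne _ r)]
        rw [h1, h2, hcdef, Fin.val_last]
        ring
      rw [Finset.sum_congr rfl (fun j _ => hterm j)] at hexp
      exact hexp.symm
    -- divide out maximal power of π
    set π := θ - (1 : AdjoinRoot (cyclotomic p ℤ)) with hπdef
    have hπ : π ≠ 0 := sub_ne_zero.mpr ((primroot p).ne_one hp.one_lt)
    have hex : ∃ t, (∀ j, π ^ t ∣ c j) ∧ ¬ (∀ j, π ^ (t+1) ∣ c j) := by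
      by_contra hcon
      push_neg at hcon
      have hall : ∀ t, ∀ j, π ^ t ∣ c j := by
        intro t
        induction t with
        | zero => intro j; simpa using one_dvd _
        | succ m ihm => exact hcon m ihm
      obtain ⟨n0, hn0⟩ := exists_not_dvd_pow p (hc 0)
      exact hn0 (hall n0 0)
    obtain ⟨t, ht, ht'⟩ := hex
    choose d hd using ht
    push_neg at ht'
    obtain ⟨j0, hj0⟩ := ht'
    have hdj0 : ¬ π ∣ d j0 := by
      rintro ⟨e, he⟩
      exact hj0 ⟨e, by rw [hd j0, he]; ring⟩
    have hrel' : ∀ i, ∑ j, M i j * d j = 0 := by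
      intro i
      have h2 : π ^ t * ∑ j, M i j * d j = 0 := by
        rw [Finset.mul_sum, ← hrel i]
        refine Finset.sum_congr rfl fun j _ => ?_
        rw [hd j]; ring
      exact (mul_eq_zero.mp h2).resolve_left (pow_ne_zero t hπ)
    set f : (AdjoinRoot (cyclotomic p ℤ))[X] := ∑ j, C (d j) * X ^ (a j) with hfdef
    have hroots : ∀ i : Fin (n+1), f.eval (θ ^ (b i)) = 0 := by
      intro i
      rw [hfdef, eval_finset_sum]
      rw [← hrel' i]
      refine Finset.sum_congr rfl fun j _ => ?_
      rw [eval_mul, eval_C, eval_pow, eval_X, ← pow_mul, hM]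
      rw [Matrix.of_apply]
      ring
    have hblt : ∀ i : Fin (n+1), b i < p :=
      fun i => lt_of_le_of_lt (hbp i) (Nat.sub_lt hp.pos one_pos)
    have hdistinct : ∀ i ∈ Finset.univ, ∀ i' ∈ (Finset.univ : Finset (Fin (n+1))),
        θ ^ (b i) = θ ^ (b i') → i = i' := by
      intro i _ i' _ hh
      exact hb.injective ((primroot p).pow_inj (hblt i) (hblt i') hh)
    have hdvd1 : (∏ i : Fin (n+1), (X - C (θ ^ (b i)))) ∣ f :=
      prod_X_sub_C_dvd_of_roots Finset.univ _ f hdistinct (fun i _ => hroots i)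
    have hdvd2 := Polynomial.map_dvd (eps p) hdvd1
    have hL : (∏ i : Fin (n+1), (X - C (θ ^ (b i)))).map (eps p)
        = (X - 1 : (ZMod p)[X]) ^ (n+1) := by
      rw [Polynomial.map_prod]
      have : ∀ i : Fin (n+1), (X - C (θ ^ (b i))).map (eps p) = (X - 1 : (ZMod p)[X]) := by
        intro i
        rw [Polynomial.map_sub, map_X, map_C, map_pow, eps_root, one_pow, map_one]
      rw [Finset.prod_congr rfl (fun i _ => this i), Finset.prod_const, Finset.card_univ,
        Fintype.card_fin]
    have hR : f.map (eps p) = ∑ j, C ((eps p) (d j)) * X ^ (a j) := by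
      rw [hfdef, Polynomial.map_sum]
      refine Finset.sum_congr rfl fun j _ => ?_
      rw [Polynomial.map_mul, map_C, Polynomial.map_pow, map_X]
    rw [hL, hR] at hdvd2
    have hεd := few_terms p hp (n+1) a ha hap (fun j => eps p (d j)) hdvd2
    exact hdj0 (dvd_of_eps_eq_zero p _ (hεd j0))

end ChebotarevAux

open ChebotarevAux in
/-- Chebotarëv's theorem: if `p` is prime and `ω ∈ ℂ` is a primitive `p`-th root of
unity, then every square submatrix of the `p×p` Fourier matrix `[ω^{ij}]` is
nonsingular: for `0 ≤ b_1 < … < b_k ≤ p-1` and `0 ≤ a_1 < … < a_k ≤ p-1` with `k ≤ p`,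
`det([ω^{b_i a_j}]) ≠ 0`. -/
theorem chebotarev_fourier_submatrix (p k : ℕ) (hp : p.Prime) (hk : k ≤ p)
    (ω : ℂ) (hω : IsPrimitiveRoot ω p)
    (b a : Fin k → ℕ) (hb : StrictMono b) (ha : StrictMono a)
    (hbp : ∀ i, b i ≤ p - 1) (hap : ∀ i, a i ≤ p - 1) :
    Matrix.det (Matrix.of fun i j : Fin k => ω ^ (b i * a j)) ≠ 0 := by
  haveI : Fact p.Prime := ⟨hp⟩
  have hroot : (cyclotomic p ℤ).eval₂ (Int.castRingHom ℂ) ω = 0 := by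
    rw [eval₂_eq_eval_map, map_cyclotomic]
    exact hω.isRoot_cyclotomic hp.pos
  set φ : AdjoinRoot (cyclotomic p ℤ) →+* ℂ :=
    AdjoinRoot.lift (Int.castRingHom ℂ) ω hroot with hφdef
  have hφroot : φ (AdjoinRoot.root (cyclotomic p ℤ)) = ω := AdjoinRoot.lift_root hroot
  -- injectivity
  have hinj : ∀ x, φ x = 0 → x = 0 := by
    intro x hx
    obtain ⟨g, rfl⟩ := AdjoinRoot.mk_surjective x
    have hmonic : (cyclotomic p ℤ).Monic := cyclotomic.monic p ℤ
    set r := g %ₘ (cyclotomic p ℤ) with hrdef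
    have hmk : AdjoinRoot.mk (cyclotomic p ℤ) r = AdjoinRoot.mk (cyclotomic p ℤ) g := by
      rw [hrdef, modByMonic_eq_sub_mul_div g (cyclotomic p ℤ)]
      rw [map_sub, map_mul, AdjoinRoot.mk_self, zero_mul, sub_zero]
    rw [← hmk] at hx ⊢
    rw [AdjoinRoot.lift_mk] at hx
    -- now hx : r.eval₂ (Int.castRingHom ℂ) ω = 0
    by_cases hr0 : r = 0
    · rw [hr0, map_zero]
    exfalso
    have haev : aeval ω (r.map (Int.castRingHom ℚ)) = 0 := by
      rw [aeval_def, eval₂_eq_eval_map, Polynomial.map_map]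
      have hcomp : ((algebraMap ℚ ℂ).comp (Int.castRingHom ℚ)) = Int.castRingHom ℂ := by
        ext x
        simp
      rw [hcomp]
      rw [eval₂_eq_eval_map] at hx
      exact hx
    have hdvd : minpoly ℚ ω ∣ r.map (Int.castRingHom ℚ) := minpoly.dvd ℚ ω haev
    rw [← cyclotomic_eq_minpoly_rat hω hp.pos] at hdvd
    have hrQ : r.map (Int.castRingHom ℚ) ≠ 0 := by
      intro h
      exact hr0 (Polynomial.map_injective _ Int.cast_injective (by simpa using h))
    have hdeg := natDegree_le_of_dvd hdvd hrQ
    rw [natDegree_cyclotomic, Nat.totient_prime hp] at hdeg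
    have hdeglt : r.natDegree < p - 1 := by
      have h1 : r.degree < (cyclotomic p ℤ).degree := degree_modByMonic_lt g hmonic
      have h2 := Polynomial.natDegree_lt_natDegree hr0 h1
      rwa [natDegree_cyclotomic, Nat.totient_prime hp] at h2
    have hnd : (r.map (Int.castRingHom ℚ)).natDegree = r.natDegree :=
      natDegree_map_eq_of_injective (f := Int.castRingHom ℚ) Int.cast_injective r
    omega
  -- conclude
  have hdet := det_root_ne_zero p hp k b a hb ha hbp hap
  intro hzero
  apply hdet
  apply hinj
  have hmap : (Matrix.of fun i j : Fin k =>
      (AdjoinRoot.root (cyclotomic p ℤ)) ^ (b i * a j)).map φ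
      = Matrix.of fun i j : Fin k => ω ^ (b i * a j) := by
    ext i j
    simp [Matrix.map_apply, map_pow, hφroot]
  have hdet2 := RingHom.map_det φ (Matrix.of fun i j : Fin k =>
      (AdjoinRoot.root (cyclotomic p ℤ)) ^ (b i * a j))
  rw [RingHom.mapMatrix_apply] at hdet2
  rw [hmap] at hdet2
  rw [hdet2, hzero]
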